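/- Let 0 ≤ T < 1. For every t ∈ [0,T] and every x ∈ ℝ^d, the conditional covariance satisfies 0 ⪯ Cov_t(x) ⪯ d·I_d in the positive-semidefinite order, and consequently the Jacobian ∇_x v*(x, t) = (t/(1−t²)²) Cov_t(x) − (t/(1−t²)) I_d has operator norm at most T d/(1−T²)², i.e. sup_{t ∈ [0,T]} sup_{x ∈ ℝ^d} ‖∇_x v*(x, t)‖_op ≤ T d/(1−T²)². -/

import Mathlib

open MeasureTheory

/-- The Gaussian kernel `g_t(x, x₁) = exp(-‖x - t x₁‖² / (2(1-t²)))`. -/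
noncomputable def gKer (d : ℕ) (t : ℝ) (x x₁ : EuclideanSpace ℝ (Fin d)) : ℝ :=
  Real.exp (-‖x - t • x₁‖ ^ 2 / (2 * (1 - t ^ 2)))

/-- `φ_t(x) = ∫ g_t(x, x₁) dπ₁(x₁)`. -/
noncomputable def phiFn (d : ℕ) (π₁ : MeasureTheory.Measure (EuclideanSpace ℝ (Fin d))) (t : ℝ)
    (x : EuclideanSpace ℝ (Fin d)) : ℝ :=
  ∫ x₁, gKer d t x x₁ ∂π₁

/-- `m_t(x) = φ_t(x)⁻¹ ∫ x₁ g_t(x, x₁) dπ₁(x₁)`. -/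
noncomputable def mFn (d : ℕ) (π₁ : MeasureTheory.Measure (EuclideanSpace ℝ (Fin d))) (t : ℝ)
    (x : EuclideanSpace ℝ (Fin d)) : EuclideanSpace ℝ (Fin d) :=
  (phiFn d π₁ t x)⁻¹ • ∫ x₁, gKer d t x x₁ • x₁ ∂π₁

/-- The velocity field `v*(x, t) = (1/(1-t²)) m_t(x) - (t/(1-t²)) x`. -/
noncomputable def vStar (d : ℕ) (π₁ : MeasureTheory.Measure (EuclideanSpace ℝ (Fin d)))
    (x : EuclideanSpace ℝ (Fin d)) (t : ℝ) : EuclideanSpace ℝ (Fin d) :=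
  (1 / (1 - t ^ 2)) • mFn d π₁ t x - (t / (1 - t ^ 2)) • x

/-- `M_t(x) = φ_t(x)⁻¹ ∫ x₁ x₁ᵀ g_t(x, x₁) dπ₁(x₁)` as a `d × d` matrix. -/
noncomputable def MMat (d : ℕ) (π₁ : MeasureTheory.Measure (EuclideanSpace ℝ (Fin d))) (t : ℝ)
    (x : EuclideanSpace ℝ (Fin d)) : Matrix (Fin d) (Fin d) ℝ :=
  Matrix.of fun i j => (phiFn d π₁ t x)⁻¹ * ∫ x₁, gKer d t x x₁ * (x₁ i * x₁ j) ∂π₁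

/-- The conditional covariance `Cov_t(x) = M_t(x) - m_t(x) m_t(x)ᵀ`. -/
noncomputable def covMat (d : ℕ) (π₁ : MeasureTheory.Measure (EuclideanSpace ℝ (Fin d))) (t : ℝ)
    (x : EuclideanSpace ℝ (Fin d)) : Matrix (Fin d) (Fin d) ℝ :=
  MMat d π₁ t x - Matrix.of fun i j => mFn d π₁ t x i * mFn d π₁ t x j

open MeasureTheory RealInnerProductSpace Matrix in
lemma opnorm_le_of_quadform {d : ℕ} (A : Matrix (Fin d) (Fin d) ℝ)
    (hsym : Aᵀ = A) (c : ℝ) (hc : 0 ≤ c)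
    (hq : ∀ v : Fin d → ℝ, |v ⬝ᵥ A *ᵥ v| ≤ c * (v ⬝ᵥ v))
    (u : EuclideanSpace ℝ (Fin d)) : ‖Matrix.toEuclideanLin A u‖ ≤ c * ‖u‖ := by
  set T : EuclideanSpace ℝ (Fin d) →ₗ[ℝ] EuclideanSpace ℝ (Fin d) := Matrix.toEuclideanLin A with hT
  have hinner : ∀ v w : EuclideanSpace ℝ (Fin d),
      ⟪T v, w⟫ = (A *ᵥ (fun i => v i)) ⬝ᵥ (fun i => w i) := by
    intro v w
    rw [hT, Matrix.toEuclideanLin_apply]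
    simp [PiLp.inner_apply, dotProduct, WithLp.equiv, Equiv.refl_apply, mul_comm]
  have hsym' : ∀ v w : EuclideanSpace ℝ (Fin d), ⟪T v, w⟫ = ⟪T w, v⟫ := by
    intro v w
    rw [hinner, hinner, dotProduct_comm, Matrix.dotProduct_mulVec,
      ← Matrix.mulVec_transpose, hsym]
  have hqv : ∀ v : EuclideanSpace ℝ (Fin d), |⟪T v, v⟫| ≤ c * ‖v‖ ^ 2 := by
    intro v
    have h1 : ⟪T v, v⟫ = (fun i => v i) ⬝ᵥ A *ᵥ (fun i => v i) := by
      rw [hinner, dotProduct_comm]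
    have h2 : ‖v‖ ^ 2 = (fun i => v i) ⬝ᵥ (fun i => v i) := by
      rw [← real_inner_self_eq_norm_sq]
      simp only [PiLp.inner_apply, dotProduct, RCLike.inner_apply, conj_trivial]
    rw [h1, h2]; exact hq _
  by_cases hTu : T u = 0
  · rw [hTu, norm_zero]; positivity
  · have hTun : 0 < ‖T u‖ := norm_pos_iff.mpr hTu
    have hun : 0 < ‖u‖ := by
      rcases (norm_nonneg u).eq_or_lt with h | h
      · exact absurd (by rw [show u = 0 from norm_eq_zero.mp h.symm]; exact map_zero T) hTu
      · exact h
    set r : ℝ := ‖u‖ / ‖T u‖ with hr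
    have hr0 : 0 < r := div_pos hun hTun
    set v := r • T u with hv
    have hvn : ‖v‖ = ‖u‖ := by
      rw [hv, norm_smul, Real.norm_eq_abs, abs_of_pos hr0, hr,
        div_mul_cancel₀ _ (ne_of_gt hTun)]
    have hTuv : ⟪T u, v⟫ = ‖u‖ * ‖T u‖ := by
      rw [hv, real_inner_smul_right, real_inner_self_eq_norm_sq, hr]
      field_simp
    have hexp : ⟪T (u + v), u + v⟫ - ⟪T (u - v), u - v⟫ = 4 * ⟪T u, v⟫ := by
      have h1 := hsym' v u
      simp only [map_add, map_sub, inner_add_left, inner_add_right, inner_sub_left,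
        inner_sub_right]
      linarith
    have hb1 := (abs_le.mp (hqv (u + v))).2
    have hb2 := (abs_le.mp (hqv (u - v))).1
    have hpar : ‖u + v‖ ^ 2 + ‖u - v‖ ^ 2 = 2 * (‖u‖ ^ 2 + ‖v‖ ^ 2) := by
      have := parallelogram_law_with_norm ℝ u v; linarith
    have key : ‖u‖ * ‖T u‖ ≤ c * ‖u‖ ^ 2 := by
      have h4 : 4 * (‖u‖ * ‖T u‖) ≤ c * (‖u + v‖ ^ 2 + ‖u - v‖ ^ 2) := by
        rw [mul_add, ← hTuv]; linarith
      rw [hpar] at h4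
      have hv2 : ‖v‖ ^ 2 = ‖u‖ ^ 2 := by rw [hvn]
      rw [hv2] at h4
      nlinarith [h4]
    nlinarith [key, hun]

open MeasureTheory Matrix

section GKerFacts

variable {d : ℕ} (π₁ : Measure (EuclideanSpace ℝ (Fin d))) [IsProbabilityMeasure π₁]
variable {t : ℝ} (x : EuclideanSpace ℝ (Fin d))

lemma gKer_pos (x₁ : EuclideanSpace ℝ (Fin d)) : 0 < gKer d t x x₁ := Real.exp_pos _

lemma gKer_le_one (ht2 : t ^ 2 < 1) (x₁ : EuclideanSpace ℝ (Fin d)) : gKer d t x x₁ ≤ 1 := by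
  unfold gKer
  rw [Real.exp_le_one_iff]
  apply div_nonpos_of_nonpos_of_nonneg
  · simp [sq_nonneg]
  · nlinarith

lemma continuous_gKer : Continuous (gKer d t x) := by
  unfold gKer; fun_prop

lemma integrable_gKer_mul (ht2 : t ^ 2 < 1)
    {f : EuclideanSpace ℝ (Fin d) → ℝ} (hf : Continuous f) {C : ℝ}
    (hC : ∀ᵐ x₁ ∂π₁, |f x₁| ≤ C) :
    Integrable (fun x₁ => gKer d t x x₁ * f x₁) π₁ := by
  refine Integrable.mono' (integrable_const C)
    (((continuous_gKer x).mul hf).aestronglyMeasurable) ?_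
  filter_upwards [hC] with x₁ h
  rw [Real.norm_eq_abs, abs_mul]
  calc |gKer d t x x₁| * |f x₁| ≤ 1 * C := by
        apply mul_le_mul _ h (abs_nonneg _) zero_le_one
        rw [abs_of_pos (gKer_pos x x₁)]; exact gKer_le_one x ht2 x₁
    _ = C := one_mul C

lemma integrable_gKer_smul (ht2 : t ^ 2 < 1)
    (hsupp : ∀ᵐ x₁ ∂π₁, ∀ i, x₁ i ∈ Set.Icc (0 : ℝ) 1) :
    Integrable (fun x₁ => gKer d t x x₁ • x₁) π₁ := by
  refine Integrable.mono' (integrable_const (Real.sqrt d))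
    (((continuous_gKer x).smul continuous_id).aestronglyMeasurable) ?_
  filter_upwards [hsupp] with x₁ h
  rw [norm_smul, Real.norm_eq_abs, abs_of_pos (gKer_pos x x₁)]
  have hn : ‖x₁‖ ≤ Real.sqrt d := by
    rw [EuclideanSpace.norm_eq]
    apply Real.sqrt_le_sqrt
    calc ∑ i, ‖x₁ i‖ ^ 2 ≤ ∑ _i : Fin d, (1 : ℝ) := by
          refine Finset.sum_le_sum fun i _ => ?_
          have h1 := (h i).1; have h2 := (h i).2
          rw [Real.norm_eq_abs, sq_abs]; nlinarith
      _ = d := by simp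
  calc gKer d t x x₁ * ‖x₁‖ ≤ 1 * Real.sqrt d :=
        mul_le_mul (gKer_le_one x ht2 x₁) hn (norm_nonneg _) zero_le_one
    _ = Real.sqrt d := one_mul _

lemma phiFn_pos (ht2 : t ^ 2 < 1) : 0 < phiFn d π₁ t x := by
  rw [phiFn]
  have hInt : Integrable (gKer d t x) π₁ := by
    have := integrable_gKer_mul π₁ x ht2 (f := fun _ => (1 : ℝ)) continuous_const
      (C := 1) (Filter.Eventually.of_forall fun _ => by norm_num)
    simpa using this
  rw [integral_pos_iff_support_of_nonneg (fun x₁ => (gKer_pos x x₁).le) hInt]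
  have : Function.support (gKer d t x) = Set.univ :=
    Set.eq_univ_of_forall fun x₁ => (gKer_pos x x₁).ne'
  rw [this]
  simp [IsProbabilityMeasure.ne_zero]

lemma mFn_apply (ht2 : t ^ 2 < 1)
    (hsupp : ∀ᵐ x₁ ∂π₁, ∀ i, x₁ i ∈ Set.Icc (0 : ℝ) 1) (i : Fin d) :
    mFn d π₁ t x i = (phiFn d π₁ t x)⁻¹ * ∫ x₁, gKer d t x x₁ * x₁ i ∂π₁ := by
  rw [mFn, PiLp.smul_apply, smul_eq_mul]
  congr 1
  have := (EuclideanSpace.proj (𝕜 := ℝ) i).integral_comp_comm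
    (integrable_gKer_smul π₁ x ht2 hsupp)
  have happ : ∀ w : EuclideanSpace ℝ (Fin d), (EuclideanSpace.proj (𝕜 := ℝ) i) w = w i := by
    intro w; rfl
  calc (∫ x₁, gKer d t x x₁ • x₁ ∂π₁) i
      = (EuclideanSpace.proj (𝕜 := ℝ) i) (∫ x₁, gKer d t x x₁ • x₁ ∂π₁) := (happ _).symm
    _ = ∫ x₁, (EuclideanSpace.proj (𝕜 := ℝ) i) (gKer d t x x₁ • x₁) ∂π₁ := this.symm
    _ = ∫ x₁, gKer d t x x₁ * x₁ i ∂π₁ := by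
        refine integral_congr_ae (Filter.Eventually.of_forall fun x₁ => ?_)
        simp only [happ, PiLp.smul_apply, smul_eq_mul]

end GKerFacts

open MeasureTheory Matrix in
lemma integrable_gKer {d : ℕ} (π₁ : Measure (EuclideanSpace ℝ (Fin d))) [IsProbabilityMeasure π₁]
    {t : ℝ} (x : EuclideanSpace ℝ (Fin d)) (ht2 : t ^ 2 < 1) :
    Integrable (gKer d t x) π₁ := by
  have := integrable_gKer_mul π₁ x ht2 (f := fun _ => (1 : ℝ)) continuous_const
    (C := 1) (Filter.Eventually.of_forall fun _ => by norm_num)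
  simpa using this

open MeasureTheory Matrix in
lemma covMat_entry_symm {d : ℕ} (π₁ : Measure (EuclideanSpace ℝ (Fin d))) (t : ℝ)
    (x : EuclideanSpace ℝ (Fin d)) (i j : Fin d) :
    covMat d π₁ t x i j = covMat d π₁ t x j i := by
  simp only [covMat, MMat, Matrix.sub_apply, Matrix.of_apply]
  have h : (fun x₁ : EuclideanSpace ℝ (Fin d) => gKer d t x x₁ * (x₁ i * x₁ j))
      = fun x₁ => gKer d t x x₁ * (x₁ j * x₁ i) := funext fun x₁ => by ring
  rw [h]; ring

open MeasureTheory Matrix in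
lemma covMat_quadform {d : ℕ} (π₁ : Measure (EuclideanSpace ℝ (Fin d))) [IsProbabilityMeasure π₁]
    (hsupp : ∀ᵐ x₁ ∂π₁, ∀ i, x₁ i ∈ Set.Icc (0 : ℝ) 1)
    {t : ℝ} (ht2 : t ^ 2 < 1) (x : EuclideanSpace ℝ (Fin d)) (u : Fin d → ℝ) :
    0 ≤ u ⬝ᵥ covMat d π₁ t x *ᵥ u ∧ u ⬝ᵥ covMat d π₁ t x *ᵥ u ≤ d * (u ⬝ᵥ u) := by
  set g := gKer d t x with hg
  set φ := phiFn d π₁ t x with hφ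
  have hφpos : 0 < φ := phiFn_pos π₁ x ht2
  set q : EuclideanSpace ℝ (Fin d) → ℝ := fun x₁ => ∑ i, u i * x₁ i with hqdef
  have hqcont : Continuous q := by
    apply continuous_finset_sum
    intro i _
    fun_prop
  have habs : ∀ᵐ x₁ ∂π₁, ∀ i, |x₁ i| ≤ 1 := by
    filter_upwards [hsupp] with x₁ h i
    have h1 := (h i).1; have h2 := (h i).2
    rw [abs_le]; constructor <;> linarith
  -- integrabilities
  have hI_g : Integrable g π₁ := integrable_gKer π₁ x ht2
  have hI_ij : ∀ i j : Fin d, Integrable (fun x₁ => g x₁ * (x₁ i * x₁ j)) π₁ := by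
    intro i j
    refine integrable_gKer_mul π₁ x ht2 (by fun_prop) (C := 1) ?_
    filter_upwards [habs] with x₁ h
    rw [abs_mul]
    exact mul_le_one₀ (h i) (abs_nonneg _) (h j)
  have hI_i : ∀ i : Fin d, Integrable (fun x₁ => g x₁ * x₁ i) π₁ := by
    intro i
    refine integrable_gKer_mul π₁ x ht2 (by fun_prop) (C := 1) ?_
    filter_upwards [habs] with x₁ h
    exact h i
  have hqbd : ∀ᵐ x₁ ∂π₁, |q x₁| ≤ ∑ i, |u i| := by
    filter_upwards [habs] with x₁ h
    calc |q x₁| ≤ ∑ i, |u i * x₁ i| := Finset.abs_sum_le_sum_abs _ _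
      _ ≤ ∑ i, |u i| := by
          refine Finset.sum_le_sum fun i _ => ?_
          rw [abs_mul]
          calc |u i| * |x₁ i| ≤ |u i| * 1 := by
                exact mul_le_mul_of_nonneg_left (h i) (abs_nonneg _)
            _ = |u i| := mul_one _
  have hI_q : Integrable (fun x₁ => g x₁ * q x₁) π₁ :=
    integrable_gKer_mul π₁ x ht2 hqcont hqbd
  have hI_q2 : Integrable (fun x₁ => g x₁ * q x₁ ^ 2) π₁ := by
    refine integrable_gKer_mul π₁ x ht2 (by fun_prop) (C := (∑ i, |u i|) ^ 2) ?_
    filter_upwards [hqbd] with x₁ h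
    rw [abs_pow]  -- |q^2| = |q|^2
    exact pow_le_pow_left₀ (abs_nonneg _) h 2
  -- integral identities
  have Iq_eq : ∫ x₁, g x₁ * q x₁ ∂π₁ = ∑ i, u i * ∫ x₁, g x₁ * x₁ i ∂π₁ := by
    have h1 : (fun x₁ => g x₁ * q x₁) = fun x₁ => ∑ i, u i * (g x₁ * x₁ i) := by
      funext x₁
      rw [hqdef, Finset.mul_sum]
      exact Finset.sum_congr rfl fun i _ => by ring
    rw [h1, integral_finset_sum _ fun i _ => (hI_i i).const_mul _]
    exact Finset.sum_congr rfl fun i _ => integral_const_mul _ _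
  have Iq2_eq : ∫ x₁, g x₁ * q x₁ ^ 2 ∂π₁
      = ∑ i, ∑ j, u i * u j * ∫ x₁, g x₁ * (x₁ i * x₁ j) ∂π₁ := by
    have h1 : (fun x₁ => g x₁ * q x₁ ^ 2)
        = fun x₁ => ∑ i, ∑ j, u i * u j * (g x₁ * (x₁ i * x₁ j)) := by
      funext x₁
      rw [hqdef, sq, Finset.sum_mul_sum]
      rw [Finset.mul_sum]
      refine Finset.sum_congr rfl fun i _ => ?_
      rw [Finset.mul_sum]
      exact Finset.sum_congr rfl fun j _ => by ring
    rw [h1, integral_finset_sum _ fun i _ =>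
      integrable_finset_sum _ fun j _ => (hI_ij i j).const_mul _]
    refine Finset.sum_congr rfl fun i _ => ?_
    rw [integral_finset_sum _ fun j _ => (hI_ij i j).const_mul _]
    exact Finset.sum_congr rfl fun j _ => integral_const_mul _ _
  -- quadratic form identities
  set IQ := ∫ x₁, g x₁ * q x₁ ∂π₁ with hIQ
  set IQ2 := ∫ x₁, g x₁ * q x₁ ^ 2 ∂π₁ with hIQ2
  set B := φ⁻¹ * IQ with hB
  have hMq : u ⬝ᵥ MMat d π₁ t x *ᵥ u = φ⁻¹ * IQ2 := by
    rw [Iq2_eq, Finset.mul_sum]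
    simp only [dotProduct, Matrix.mulVec, MMat, Matrix.of_apply]
    refine Finset.sum_congr rfl fun i _ => ?_
    rw [Finset.mul_sum, Finset.mul_sum]
    exact Finset.sum_congr rfl fun j _ => by rw [← hg, ← hφ]; ring
  have hBm : ∑ i, u i * mFn d π₁ t x i = B := by
    rw [hB, Iq_eq, Finset.mul_sum]
    refine Finset.sum_congr rfl fun i _ => ?_
    rw [mFn_apply π₁ x ht2 hsupp i, ← hg, ← hφ]
    ring
  have hmu : u ⬝ᵥ (Matrix.of fun i j => mFn d π₁ t x i * mFn d π₁ t x j) *ᵥ u = B ^ 2 := by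
    rw [← hBm, sq, Finset.sum_mul_sum]
    simp only [dotProduct, Matrix.mulVec, Matrix.of_apply]
    refine Finset.sum_congr rfl fun i _ => ?_
    rw [Finset.mul_sum]
    exact Finset.sum_congr rfl fun j _ => by ring
  have hquad : u ⬝ᵥ covMat d π₁ t x *ᵥ u = φ⁻¹ * IQ2 - B ^ 2 := by
    rw [covMat, Matrix.sub_mulVec, dotProduct_sub, hMq, hmu]
  -- variance nonnegativity
  have hIQval : IQ = φ * B := by
    rw [hB]; field_simp
  have h0 : 0 ≤ ∫ x₁, g x₁ * (q x₁ - B) ^ 2 ∂π₁ :=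
    integral_nonneg fun x₁ => mul_nonneg (gKer_pos x x₁).le (sq_nonneg _)
  have hexpand : ∫ x₁, g x₁ * (q x₁ - B) ^ 2 ∂π₁ = IQ2 - 2 * B * IQ + B ^ 2 * φ := by
    have h1 : (fun x₁ => g x₁ * (q x₁ - B) ^ 2)
        = fun x₁ => (g x₁ * q x₁ ^ 2 - 2 * B * (g x₁ * q x₁)) + B ^ 2 * g x₁ :=
      funext fun x₁ => by ring
    have hgphi : ∫ x₁, g x₁ ∂π₁ = φ := by rw [hφ]; rfl
    have hIa : Integrable (fun x₁ => g x₁ * q x₁ ^ 2 - 2 * B * (g x₁ * q x₁)) π₁ :=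
      hI_q2.sub (hI_q.const_mul _)
    have hIb : Integrable (fun x₁ => B ^ 2 * g x₁) π₁ := hI_g.const_mul _
    have hIc : Integrable (fun x₁ => 2 * B * (g x₁ * q x₁)) π₁ := hI_q.const_mul _
    rw [h1, integral_add hIa hIb, integral_sub hI_q2 hIc, integral_const_mul,
      integral_const_mul, hgphi]
  have hvar : φ * B ^ 2 ≤ IQ2 := by
    rw [hexpand, hIQval] at h0; nlinarith
  -- upper bound on IQ2
  have hub : IQ2 ≤ φ * ((u ⬝ᵥ u) * d) := by
    have hle : ∀ᵐ x₁ ∂π₁, g x₁ * q x₁ ^ 2 ≤ g x₁ * ((u ⬝ᵥ u) * d) := by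
      filter_upwards [habs] with x₁ h
      refine mul_le_mul_of_nonneg_left ?_ (gKer_pos x x₁).le
      have hcs : q x₁ ^ 2 ≤ (∑ i, u i ^ 2) * ∑ i, x₁ i ^ 2 :=
        Finset.sum_mul_sq_le_sq_mul_sq _ _ _
      have hx2 : ∑ i, x₁ i ^ 2 ≤ (d : ℝ) := by
        calc ∑ i, x₁ i ^ 2 ≤ ∑ _i : Fin d, (1 : ℝ) := by
              refine Finset.sum_le_sum fun i _ => ?_
              have := h i
              rw [← sq_abs]
              nlinarith [abs_nonneg (x₁ i)]
          _ = d := by simp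
      have huu : u ⬝ᵥ u = ∑ i, u i ^ 2 := Finset.sum_congr rfl fun i _ => (sq (u i)).symm
      rw [huu]
      calc q x₁ ^ 2 ≤ (∑ i, u i ^ 2) * ∑ i, x₁ i ^ 2 := hcs
        _ ≤ (∑ i, u i ^ 2) * d :=
            mul_le_mul_of_nonneg_left hx2 (Finset.sum_nonneg fun i _ => sq_nonneg _)
    have := integral_mono_ae hI_q2 (hI_g.mul_const _) hle
    rw [hIQ2]
    calc (∫ x₁, g x₁ * q x₁ ^ 2 ∂π₁) ≤ ∫ x₁, g x₁ * ((u ⬝ᵥ u) * d) ∂π₁ := this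
      _ = φ * ((u ⬝ᵥ u) * d) := by rw [integral_mul_const, hφ, phiFn]
  constructor
  · rw [hquad]
    have h1 : φ⁻¹ * IQ2 - B ^ 2 = φ⁻¹ * (IQ2 - φ * B ^ 2) := by
      field_simp
    rw [h1]
    exact mul_nonneg (inv_nonneg.mpr hφpos.le) (by linarith)
  · rw [hquad]
    have h2 : φ⁻¹ * IQ2 ≤ (u ⬝ᵥ u) * d := by
      rw [inv_mul_le_iff₀ hφpos]
      linarith [hub]
    nlinarith [sq_nonneg B]

/-- For `0 ≤ T < 1`, every `t ∈ [0,T]` and every `x ∈ ℝ^d`: the conditional covariance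
satisfies `0 ⪯ Cov_t(x) ⪯ d·I_d`, and consequently the Jacobian
`∇ₓ v*(x,t) = (t/(1-t²)²) Cov_t(x) - (t/(1-t²)) I_d` has operator norm at most
`T d/(1-T²)²` (operator norm expressed as `sup_{‖u‖ ≤ 1} ‖A u‖`). -/
theorem covariance_psd_and_jacobian_opnorm_bound
    (d : ℕ) (hd : 1 ≤ d)
    (π₁ : Measure (EuclideanSpace ℝ (Fin d))) [IsProbabilityMeasure π₁]
    (hsupp : ∀ᵐ x₁ ∂π₁, ∀ i, x₁ i ∈ Set.Icc (0 : ℝ) 1)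
    (T : ℝ) (hT0 : 0 ≤ T) (hT1 : T < 1)
    (t : ℝ) (ht : t ∈ Set.Icc (0 : ℝ) T) (x : EuclideanSpace ℝ (Fin d)) :
    (covMat d π₁ t x).PosSemidef ∧
    ((d : ℝ) • (1 : Matrix (Fin d) (Fin d) ℝ) - covMat d π₁ t x).PosSemidef ∧
    ∀ u : EuclideanSpace ℝ (Fin d), ‖u‖ ≤ 1 →
      ‖Matrix.toEuclideanLin
          ((t / (1 - t ^ 2) ^ 2) • covMat d π₁ t x
            - (t / (1 - t ^ 2)) • (1 : Matrix (Fin d) (Fin d) ℝ)) u‖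
        ≤ T * d / (1 - T ^ 2) ^ 2 := by
  obtain ⟨ht0, htT⟩ := ht
  have ht1 : t < 1 := lt_of_le_of_lt htT hT1
  have ht2 : t ^ 2 < 1 := by nlinarith
  have hd1 : (1 : ℝ) ≤ d := by exact_mod_cast hd
  have hstar : ∀ v : Fin d → ℝ, star v = v := fun v => funext fun i => rfl
  have hcovT : (covMat d π₁ t x)ᵀ = covMat d π₁ t x := by
    ext i j
    rw [Matrix.transpose_apply]
    exact covMat_entry_symm π₁ t x j i
  have hherm : (covMat d π₁ t x).IsHermitian := by
    rw [Matrix.IsHermitian]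
    ext i j
    rw [Matrix.conjTranspose_apply, star_trivial]
    exact covMat_entry_symm π₁ t x j i
  have hquad := fun v => covMat_quadform π₁ hsupp ht2 x v
  have hone : ∀ i j : Fin d, (1 : Matrix (Fin d) (Fin d) ℝ) j i = (1 : Matrix (Fin d) (Fin d) ℝ) i j := by
    intro i j
    by_cases h : i = j
    · rw [h]
    · rw [Matrix.one_apply_ne h, Matrix.one_apply_ne (Ne.symm h)]
  refine ⟨Matrix.posSemidef_iff_dotProduct_mulVec.mpr ⟨hherm, fun v => ?_⟩,
    Matrix.posSemidef_iff_dotProduct_mulVec.mpr ⟨?_, fun v => ?_⟩, ?_⟩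
  · rw [hstar]
    exact (hquad v).1
  · rw [Matrix.IsHermitian]
    ext i j
    rw [Matrix.conjTranspose_apply, star_trivial]
    simp only [Matrix.sub_apply, Matrix.smul_apply, smul_eq_mul]
    rw [covMat_entry_symm π₁ t x j i, hone i j]
  · rw [hstar]
    have h := (hquad v).2
    rw [Matrix.sub_mulVec, dotProduct_sub]
    have h1 : v ⬝ᵥ ((d : ℝ) • (1 : Matrix (Fin d) (Fin d) ℝ)) *ᵥ v = d * (v ⬝ᵥ v) := by
      rw [Matrix.smul_mulVec, Matrix.one_mulVec, dotProduct_smul, smul_eq_mul]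
    rw [h1]
    linarith
  · intro u hu
    have h1t : 0 < 1 - t ^ 2 := by nlinarith
    have h1T : 0 < 1 - T ^ 2 := by nlinarith
    set a := t / (1 - t ^ 2) ^ 2 with hadef
    set b := t / (1 - t ^ 2) with hbdef
    set c := T * (d : ℝ) / (1 - T ^ 2) ^ 2 with hcdef
    have ha : 0 ≤ a := div_nonneg ht0 (by positivity)
    have hb : 0 ≤ b := div_nonneg ht0 h1t.le
    have hc : 0 ≤ c := by positivity
    have hbad : b ≤ a * d := by
      rw [hbdef, hadef, div_mul_eq_mul_div, div_le_div_iff₀ h1t (by positivity)]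
      nlinarith [mul_nonneg (mul_nonneg ht0 h1t.le) (sq_nonneg t),
        mul_nonneg (mul_nonneg ht0 h1t.le) (sub_nonneg.mpr hd1)]
    have hadc : a * d ≤ c := by
      rw [hadef, hcdef, div_mul_eq_mul_div, div_le_div_iff₀ (by positivity) (by positivity)]
      have hEe : 1 - T ^ 2 ≤ 1 - t ^ 2 := by nlinarith
      have key : t * (1 - T ^ 2) ^ 2 ≤ T * (1 - t ^ 2) ^ 2 := by
        calc t * (1 - T ^ 2) ^ 2 ≤ t * (1 - t ^ 2) ^ 2 :=
              mul_le_mul_of_nonneg_left (pow_le_pow_left₀ h1T.le hEe 2) ht0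
          _ ≤ T * (1 - t ^ 2) ^ 2 := mul_le_mul_of_nonneg_right htT (by positivity)
      nlinarith [mul_le_mul_of_nonneg_right key (Nat.cast_nonneg (α := ℝ) d)]
    have hsymA : (a • covMat d π₁ t x - b • (1 : Matrix (Fin d) (Fin d) ℝ))ᵀ
        = a • covMat d π₁ t x - b • (1 : Matrix (Fin d) (Fin d) ℝ) := by
      rw [Matrix.transpose_sub, Matrix.transpose_smul, Matrix.transpose_smul,
        Matrix.transpose_one, hcovT]
    have hq : ∀ v : Fin d → ℝ,
        |v ⬝ᵥ (a • covMat d π₁ t x - b • (1 : Matrix (Fin d) (Fin d) ℝ)) *ᵥ v|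
          ≤ c * (v ⬝ᵥ v) := by
      intro v
      have hQ := hquad v
      have hN : 0 ≤ v ⬝ᵥ v := Finset.sum_nonneg fun i _ => mul_self_nonneg _
      have expand : v ⬝ᵥ (a • covMat d π₁ t x - b • (1 : Matrix (Fin d) (Fin d) ℝ)) *ᵥ v
          = a * (v ⬝ᵥ covMat d π₁ t x *ᵥ v) - b * (v ⬝ᵥ v) := by
        rw [Matrix.sub_mulVec, dotProduct_sub, Matrix.smul_mulVec,
          dotProduct_smul, Matrix.smul_mulVec, Matrix.one_mulVec,
          dotProduct_smul, smul_eq_mul, smul_eq_mul]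
      rw [expand, abs_le]
      have h1 : b * (v ⬝ᵥ v) ≤ a * (d : ℝ) * (v ⬝ᵥ v) := mul_le_mul_of_nonneg_right hbad hN
      have h2 : a * (d : ℝ) * (v ⬝ᵥ v) ≤ c * (v ⬝ᵥ v) := mul_le_mul_of_nonneg_right hadc hN
      have h3 : 0 ≤ a * (v ⬝ᵥ covMat d π₁ t x *ᵥ v) := mul_nonneg ha hQ.1
      have h4 : a * (v ⬝ᵥ covMat d π₁ t x *ᵥ v) ≤ a * ((d : ℝ) * (v ⬝ᵥ v)) :=
        mul_le_mul_of_nonneg_left hQ.2 ha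
      have h5 : 0 ≤ b * (v ⬝ᵥ v) := mul_nonneg hb hN
      have h6 : a * ((d : ℝ) * (v ⬝ᵥ v)) = a * (d : ℝ) * (v ⬝ᵥ v) := (mul_assoc _ _ _).symm
      constructor
      · linarith
      · linarith
    have hfin := opnorm_le_of_quadform _ hsymA c hc hq u
    calc ‖Matrix.toEuclideanLin (a • covMat d π₁ t x
            - b • (1 : Matrix (Fin d) (Fin d) ℝ)) u‖ ≤ c * ‖u‖ := hfin
      _ ≤ c * 1 := mul_le_mul_of_nonneg_left hu hc
      _ = c := mul_one c
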